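/- Let V be a Gotzmann set of monomials of degree d in K[x_1,...,x_n] with gcd(V) = 1 and |V| > 1. Then for any index i as in the splitting lemma (with V_{0,i} Gotzmann and x_i V_{d,i} ⊆ (M\{x_i})V_{0,i}), one has gcd(V_{0,i}) = x_i. -/
import Mathlib


open Finset

/-- Monomials of `K[x_1,…,x_n]` are encoded as exponent vectors `Fin n → ℕ`.
`mulVarsOn S W = {x_j · w : w ∈ W, j ∈ S}`. -/
def mulVarsOn {n : ℕ} (S : Finset (Fin n)) (W : Finset (Fin n → ℕ)) :
    Finset (Fin n → ℕ) :=
  W.biUnion fun v => S.image fun j => v + Pi.single j 1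

/-- `MV = {x_j · v : v ∈ V, 1 ≤ j ≤ n}`. -/
def mulVars {n : ℕ} (W : Finset (Fin n → ℕ)) : Finset (Fin n → ℕ) :=
  mulVarsOn Finset.univ W

/-- `IsBinRep m h p f` says that `h = ∑_{j=p}^{m} C(f j + j, j)` is the `m`-th
binomial representation of `h`: `1 ≤ p ≤ m` and `f` is weakly increasing on `[p,m]`. -/
def IsBinRep (m h p : ℕ) (f : ℕ → ℕ) : Prop :=
  1 ≤ p ∧ p ≤ m ∧ (∀ j k, p ≤ j → j ≤ k → k ≤ m → f j ≤ f k) ∧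
    h = ∑ j ∈ Finset.Icc p m, Nat.choose (f j + j) j

/-- `h^{<m>} = ∑_{j=p}^{m} C(f j + j + 1, j)` for the `m`-th binomial representation `(p, f)`. -/
def upVal (m p : ℕ) (f : ℕ → ℕ) : ℕ :=
  ∑ j ∈ Finset.Icc p m, Nat.choose (f j + j + 1) j

/-- `h_{<<m>>} = ∑_{j=p}^{m} C(f j + j - 1, j - 1)` for the `m`-th binomial representation `(p, f)`. -/
def downVal (m p : ℕ) (f : ℕ → ℕ) : ℕ :=
  ∑ j ∈ Finset.Icc p m, Nat.choose (f j + j - 1) (j - 1)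

/-- `W` is a Gotzmann set with respect to the set of variables `S`:
either `W = ∅`, or (in at most one variable) `|SW| = |W|`, or
`|SW| = |W|^{<|S|-1>}` computed from the `(|S|-1)`-th binomial representation of `|W|`. -/
def IsGotzmannOn {n : ℕ} (S : Finset (Fin n)) (W : Finset (Fin n → ℕ)) : Prop :=
  W = ∅ ∨ (S.card ≤ 1 ∧ (mulVarsOn S W).card = W.card) ∨
    ∃ p f, IsBinRep (S.card - 1) W.card p f ∧
      (mulVarsOn S W).card = upVal (S.card - 1) p f

/-- `V` is a Gotzmann set of monomials of `K[x_1,…,x_n]`: `|MV| = |V|^{<n-1>}`. -/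
def IsGotzmann {n : ℕ} (W : Finset (Fin n → ℕ)) : Prop :=
  IsGotzmannOn Finset.univ W

/-- The exponent vector of `gcd(V)` (pointwise minimum of the exponent vectors). -/
noncomputable def gcdMon {n : ℕ} (V : Finset (Fin n → ℕ)) : Fin n → ℕ :=
  fun j => sInf ((fun v => v j) '' (V : Set (Fin n → ℕ)))

/-- `w` comes strictly earlier than `v` in the lexicographic order on monomials
(`x_1 > x_2 > … > x_n`, larger exponent vector comes earlier). -/
def lexEarlier {n : ℕ} (w v : Fin n → ℕ) : Prop :=
  ∃ i : Fin n, (∀ j, j < i → w j = v j) ∧ v i < w i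

/-- `V` is a lexsegment set of monomials of degree `d`: an initial segment of
the monomials of degree `d` in lexicographic order. -/
def IsLexSegment (n d : ℕ) (V : Finset (Fin n → ℕ)) : Prop :=
  (∀ v ∈ V, ∑ j, v j = d) ∧
    ∀ v ∈ V, ∀ w : Fin n → ℕ, (∑ j, w j = d) → lexEarlier w v → w ∈ V

/-- `V` is strongly stable: for `u ∈ V`, `i < j` with `x_j ∣ u`, also `(x_i/x_j)·u ∈ V`. -/
def IsStronglyStable {n : ℕ} (V : Finset (Fin n → ℕ)) : Prop :=
  ∀ u ∈ V, ∀ i j : Fin n, i < j → 0 < u j →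
    (u + Pi.single i 1 - Pi.single j 1) ∈ V

/-- `u` is a fixed empty element of `V` (of degree `d`) for `i`: no monomial of
degree `d` which is under `u` for `i` (all exponents except possibly the `i`-th
bounded by those of `u`) belongs to `V`. -/
def IsFEE (n d : ℕ) (V : Finset (Fin n → ℕ)) (i : Fin n) (u : Fin n → ℕ) : Prop :=
  u ∉ V ∧ ∀ v : Fin n → ℕ, (∑ j, v j = d) → (∀ j, j ≠ i → v j ≤ u j) → v ∉ V

/-- For a Gotzmann set `V` with `gcd(V)=1`, `|V|>1`, and an index `i` as in the
splitting lemma, one has `gcd(V_{0,i}) = x_i`. -/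
theorem gcd_V0i (n d : ℕ) (V : Finset (Fin n → ℕ))
    (hdeg : ∀ v ∈ V, ∑ j, v j = d) (hgcd : gcdMon V = 0) (h1 : 1 < V.card)
    (hG : IsGotzmann V) (i : Fin n)
    (hG0 : IsGotzmann (V.filter fun v => 0 < v i))
    (hsub : ((V.filter fun v => v i = 0).image fun v => v + Pi.single i 1) ⊆
      mulVarsOn (Finset.univ.erase i) (V.filter fun v => 0 < v i)) :
    gcdMon (V.filter fun v => 0 < v i) = Pi.single i 1 := by
  classical
  have hVne : V.Nonempty := Finset.card_pos.mp (by omega)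
  set W := V.filter fun v => 0 < v i with hW
  have hzero : ∀ j : Fin n, ∃ v ∈ V, v j = 0 := by
    intro j
    have hne : ((fun v => v j) '' (V : Set (Fin n → ℕ))).Nonempty :=
      (hVne.to_set).image _
    have hmem := Nat.sInf_mem hne
    have h0 : gcdMon V j = 0 := by rw [hgcd]; rfl
    rw [show sInf ((fun v => v j) '' (V : Set (Fin n → ℕ))) = gcdMon V j from rfl, h0] at hmem
    obtain ⟨v, hv, hvj⟩ := hmem
    exact ⟨v, hv, hvj⟩
  have hkey : ∀ v ∈ V, v i = 0 →
      ∃ w ∈ W, ∃ k : Fin n, k ≠ i ∧ w + Pi.single k 1 = v + Pi.single i 1 := by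
    intro v hv hvi
    have hmem : v + Pi.single i 1 ∈
        (V.filter fun v => v i = 0).image fun v => v + Pi.single i 1 :=
      Finset.mem_image_of_mem _ (Finset.mem_filter.mpr ⟨hv, hvi⟩)
    have h2 := hsub hmem
    simp only [mulVarsOn, Finset.mem_biUnion, Finset.mem_image, Finset.mem_erase,
      Finset.mem_univ, and_true] at h2
    obtain ⟨w, hw, k, hk, heq⟩ := h2
    exact ⟨w, hw, k, hk, heq⟩
  obtain ⟨v0, hv0, hv0i⟩ := hzero i
  obtain ⟨w0, hw0, k0, hk0, heq0⟩ := hkey v0 hv0 hv0i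
  have hw0i : w0 i = 1 := by
    have := congrFun heq0 i
    simp only [Pi.add_apply, Pi.single_eq_same, Pi.single_eq_of_ne (Ne.symm hk0), hv0i] at this
    omega
  funext j
  by_cases hj : j = i
  · subst hj
    rw [Pi.single_eq_same]
    have hmem1 : (1 : ℕ) ∈ (fun v => v j) '' (W : Set (Fin n → ℕ)) :=
      ⟨w0, by simpa using hw0, hw0i⟩
    refine le_antisymm (Nat.sInf_le hmem1) ?_
    obtain ⟨w, hw, hwj⟩ := Nat.sInf_mem ⟨1, hmem1⟩
    have : 0 < w j := (Finset.mem_filter.mp hw).2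
    calc (1:ℕ) ≤ w j := this
      _ = sInf ((fun v => v j) '' (W : Set (Fin n → ℕ))) := hwj
      _ = gcdMon W j := rfl
  · have hsj : (Pi.single i 1 : Fin n → ℕ) j = 0 := Pi.single_eq_of_ne hj 1
    rw [hsj]
    apply Nat.sInf_eq_zero.mpr
    left
    obtain ⟨v, hv, hvj⟩ := hzero j
    rcases Nat.eq_zero_or_pos (v i) with hvi | hvi
    · obtain ⟨w, hw, k, hk, heq⟩ := hkey v hv hvi
      have := congrFun heq j
      have h1' : (Pi.single i 1 : Fin n → ℕ) j = 0 := Pi.single_eq_of_ne hj 1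
      have h2' : w j ≤ w j + (Pi.single k 1 : Fin n → ℕ) j := Nat.le_add_right _ _
      refine ⟨w, by simpa using hw, ?_⟩
      simp only [Pi.add_apply, h1', hvj, Nat.zero_add, Nat.add_zero] at this
      exact Nat.eq_zero_of_add_eq_zero_right this
    · exact ⟨v, by simp [hW, Finset.mem_filter, hv, hvi], hvj⟩
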